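/- arXiv:1711.00884 — 7 statements merged into one kernel-verified Lean document; each statement's English description precedes it below -/
import Mathlib

section
/- Let (A, ⊤) be a locality algebra (commutative) over a field K and let P : A → A be an idempotent locality linear operator, giving A = A₁ ⊕ A₂ with A₁ = ker(Id − P) and A₂ = ker P. If A₁ and A₂ are locality subalgebras of A and P, Id − P are independent locality maps, then P is a locality Rota–Baxter operator of weight −1: for all (a,b) ∈ ⊤, P(a)P(b) = P(P(a)b) + P(aP(b)) − P(ab). -/
/-- Let `(A, r)` be a commutative locality algebra over a field `K`
(symmetric relation whose polar sets are linear subspaces, product compatible with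
the relation), and `P : A → A` an idempotent locality linear operator with
`A₁ = ker (Id - P)`, `A₂ = ker P`. If `A₁` and `A₂` are locality subalgebras of `A`
and `P`, `Id − P` are independent locality maps, then `P` is a locality Rota–Baxter
operator of weight `−1`: for all `(a,b) ∈ ⊤`,
`P a * P b = P (P a * b) + P (a * P b) − P (a * b)`. -/
theorem locality_rota_baxter_of_projections
    {K A : Type*} [Field K] [CommRing A] [Algebra K A]
    (r : A → A → Prop)
    (hsym : ∀ a b, r a b → r b a)
    -- polar subsets are linear subspaces
    (hzero : ∀ x : A, r x 0)
    (hadd : ∀ x a b : A, r x a → r x b → r x (a + b))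
    (hsmul : ∀ (x : A) (k : K) (a : A), r x a → r x (k • a))
    -- the product is compatible with the locality relation
    (hcompat : ∀ x a b : A, r x a → r x b → r a b → r x (a * b))
    (P : A →ₗ[K] A) (hidem : P ∘ₗ P = P)
    -- A₁ = ker (Id − P) and A₂ = ker P are locality subalgebras
    (hA1 : ∀ a b : A, a ∈ LinearMap.ker (LinearMap.id - P) →
      b ∈ LinearMap.ker (LinearMap.id - P) → r a b →
        a * b ∈ LinearMap.ker (LinearMap.id - P))
    (hA2 : ∀ a b : A, a ∈ LinearMap.ker P → b ∈ LinearMap.ker P → r a b →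
        a * b ∈ LinearMap.ker P)
    -- P and Id − P are independent locality maps
    (hPP : ∀ a b : A, r a b → r (P a) (P b))
    (hPQ : ∀ a b : A, r a b → r (P a) (b - P b))
    (hQP : ∀ a b : A, r a b → r (a - P a) (P b))
    (hQQ : ∀ a b : A, r a b → r (a - P a) (b - P b)) :
    ∀ a b : A, r a b → P a * P b = P (P a * b) + P (a * P b) - P (a * b) := by
  intro a b hab
  have hPid : ∀ x : A, P (P x) = P x := fun x => congrFun (congrArg DFunLike.coe hidem) x
  -- P a * P b ∈ ker (Id - P)
  have h1 : P a ∈ LinearMap.ker (LinearMap.id - P) := by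
    simp [LinearMap.mem_ker, hPid]
  have h1b : P b ∈ LinearMap.ker (LinearMap.id - P) := by
    simp [LinearMap.mem_ker, hPid]
  have hfix : P (P a * P b) = P a * P b := by
    have := hA1 (P a) (P b) h1 h1b (hPP a b hab)
    have h := LinearMap.mem_ker.mp this
    simp only [LinearMap.sub_apply, LinearMap.id_apply] at h
    exact (sub_eq_zero.mp h).symm
  have h2 : a - P a ∈ LinearMap.ker P := by
    simp [LinearMap.mem_ker, hPid]
  have h2b : b - P b ∈ LinearMap.ker P := by
    simp [LinearMap.mem_ker, hPid]
  have hkill : P ((a - P a) * (b - P b)) = 0 :=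
    LinearMap.mem_ker.mp (hA2 _ _ h2 h2b (hQQ a b hab))
  have key : P a * b + a * P b - a * b = P a * P b - (a - P a) * (b - P b) := by ring
  have expand : P (P a * b) + P (a * P b) - P (a * b)
      = P (P a * b + a * P b - a * b) := by rw [map_sub, map_add]
  rw [expand, key, map_sub, hfix, hkill, sub_zero]
end

section
/- Conversely, let (A, ⊤) be a commutative locality algebra and P : A → A an idempotent locality linear operator that is a locality Rota–Baxter operator of weight −1 (in particular P is independent of Id). Then A₁ = P(A) and A₂ = (Id − P)(A) are locality subalgebras of A: if (a, b) ∈ ⊤ then P(a)P(b) ∈ A₁ and (Id−P)(a)(Id−P)(b) ∈ A₂. -/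
/-- Let `(A, r)` be a commutative locality algebra and `P : A → A` an
idempotent locality linear operator which is a locality Rota–Baxter operator of
weight `−1` (in particular `P` is independent of the identity). Then
`A₁ = P(A)` and `A₂ = (Id − P)(A)` are locality subalgebras of `A`:
if `r a b` then `P a * P b ∈ A₁` and `(a − P a) * (b − P b) ∈ A₂`. -/
theorem images_are_locality_subalgebras
    {K A : Type*} [Field K] [CommRing A] [Algebra K A]
    (r : A → A → Prop)
    (hsym : ∀ a b, r a b → r b a)
    (hzero : ∀ x : A, r x 0)
    (hadd : ∀ x a b : A, r x a → r x b → r x (a + b))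
    (hsmul : ∀ (x : A) (k : K) (a : A), r x a → r x (k • a))
    (hcompat : ∀ x a b : A, r x a → r x b → r a b → r x (a * b))
    (P : A →ₗ[K] A) (hidem : P ∘ₗ P = P)
    -- P is a locality map independent of the identity
    (hPP : ∀ a b : A, r a b → r (P a) (P b))
    (hPid : ∀ a b : A, r a b → r (P a) b)
    (hidP : ∀ a b : A, r a b → r a (P b))
    -- locality Rota–Baxter identity of weight −1
    (hRB : ∀ a b : A, r a b → P a * P b = P (P a * b) + P (a * P b) - P (a * b)) :
    ∀ a b : A, r a b →
      P a * P b ∈ LinearMap.range P ∧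
      (a - P a) * (b - P b) ∈ LinearMap.range (LinearMap.id - P) := by
  intro a b hab
  have hid : ∀ x : A, P (P x) = P x := fun x => LinearMap.congr_fun hidem x
  constructor
  · exact ⟨P a * b + a * P b - a * b, by rw [map_sub, map_add, hRB a b hab]⟩
  · refine ⟨(a - P a) * (b - P b), ?_⟩
    have h1 := hRB a b hab
    have h2 := hRB (P a) (P b) (hPP a b hab)
    rw [hid a, hid b] at h2
    have h3 : P (P a * P b) = P a * P b := by linear_combination -h2
    have hP0 : P ((a - P a) * (b - P b)) = 0 := by
      have : (a - P a) * (b - P b) = a * b - a * P b - P a * b + P a * P b := by ring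
      rw [this, map_add, map_sub, map_sub, h3, h1]
      ring
    simp [LinearMap.sub_apply, hP0]
end

section
/- Let P be a locality Rota–Baxter operator of weight λ on a locality algebra (A, ⊤). Then −λ·Id − P is also a locality Rota–Baxter operator of weight λ. -/
/-- If `P` is a locality Rota–Baxter operator of weight `λ` on a
locality algebra `(A, r)` (so `P` is a locality linear map independent of the
identity), then `Q = −λ·Id − P` is also a locality Rota–Baxter operator of weight
`λ`: it is a locality linear map independent of the identity satisfying the same
Rota–Baxter relation of weight `λ`. -/
theorem neg_weight_sub_is_locality_rota_baxter
    {K A : Type*} [Field K] [CommRing A] [Algebra K A]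
    (r : A → A → Prop)
    (hsym : ∀ a b, r a b → r b a)
    (hzero : ∀ x : A, r x 0)
    (hadd : ∀ x a b : A, r x a → r x b → r x (a + b))
    (hsmul : ∀ (x : A) (k : K) (a : A), r x a → r x (k • a))
    (hcompat : ∀ x a b : A, r x a → r x b → r a b → r x (a * b))
    (lam : K) (P : A →ₗ[K] A)
    (hPP : ∀ a b : A, r a b → r (P a) (P b))
    (hPid : ∀ a b : A, r a b → r (P a) b)
    (hidP : ∀ a b : A, r a b → r a (P b))
    (hRB : ∀ a b : A, r a b →
      P a * P b = P (P a * b) + P (a * P b) + lam • P (a * b))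
    (Q : A →ₗ[K] A) (hQ : Q = -(lam • (LinearMap.id : A →ₗ[K] A)) - P) :
    (∀ a b : A, r a b → r (Q a) (Q b)) ∧
    (∀ a b : A, r a b → r (Q a) b) ∧
    (∀ a b : A, r a b → r a (Q b)) ∧
    (∀ a b : A, r a b →
      Q a * Q b = Q (Q a * b) + Q (a * Q b) + lam • Q (a * b)) := by
  subst hQ
  simp only [LinearMap.sub_apply, LinearMap.neg_apply, LinearMap.smul_apply,
    LinearMap.id_coe, id_eq]
  have hQr : ∀ x y : A, r x y → r x (-(lam • y) - P y) := by
    intro x y hxy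
    have h1 : r x (-(lam • y)) := by
      have := hsmul x (-lam) y hxy
      simpa [neg_smul] using this
    have h2 : r x (-(P y)) := by
      have := hsmul x (-1 : K) (P y) (hidP x y hxy)
      simpa using this
    have := hadd x _ _ h1 h2
    simpa [sub_eq_add_neg] using this
  refine ⟨?_, ?_, ?_, ?_⟩
  · intro a b hab
    exact hQr _ _ (hsym _ _ (hQr b a (hsym _ _ hab)))
  · intro a b hab
    exact hsym _ _ (hQr b a (hsym _ _ hab))
  · intro a b hab
    exact hQr a b hab
  · intro a b hab
    have e := hRB a b hab
    have h1 : (-(lam • a) - P a) * b = -(lam • (a * b)) - P a * b := by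
      rw [sub_mul, neg_mul, smul_mul_assoc]
    have h2 : a * (-(lam • b) - P b) = -(lam • (a * b)) - a * P b := by
      rw [mul_sub, mul_neg, mul_smul_comm]
    rw [h1, h2]; simp only [map_sub, map_neg, map_smul]
    simp only [Algebra.smul_def] at e ⊢
    linear_combination e
end

section
/- Let (A, ⊤, P) be as above with P idempotent, A₁ and A₂ locality subalgebras, and P, Id−P independent locality maps. Then P is locality multiplicative (P(ab) = P(a)P(b) for (a, b) ∈ ⊤) if and only if A₂ = ker P is a locality ideal of A. -/
/-- Let `(A, r)` be a commutative locality algebra, `P` an idempotent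
locality linear projection with `A₁ = im P` and `A₂ = ker P` locality subalgebras,
and `P`, `Id − P` independent locality maps. Then `P` is locality multiplicative
(`P (a*b) = P a * P b` for `(a,b) ∈ ⊤`) if and only if `A₂ = ker P` is a locality
ideal of `A` (i.e. `a * b ∈ ker P` whenever `b ∈ ker P`, `a ∈ A` and `r a b`). -/
theorem locality_multiplicative_iff_ker_locality_ideal
    {K A : Type*} [Field K] [CommRing A] [Algebra K A]
    (r : A → A → Prop)
    (hsym : ∀ a b, r a b → r b a)
    (hzero : ∀ x : A, r x 0)
    (hadd : ∀ x a b : A, r x a → r x b → r x (a + b))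
    (hsmul : ∀ (x : A) (k : K) (a : A), r x a → r x (k • a))
    (hcompat : ∀ x a b : A, r x a → r x b → r a b → r x (a * b))
    (P : A →ₗ[K] A) (hidem : P ∘ₗ P = P)
    -- A₁ = im P and A₂ = ker P are locality subalgebras
    (hA1 : ∀ a b : A, a ∈ LinearMap.range P → b ∈ LinearMap.range P → r a b →
        a * b ∈ LinearMap.range P)
    (hA2 : ∀ a b : A, a ∈ LinearMap.ker P → b ∈ LinearMap.ker P → r a b →
        a * b ∈ LinearMap.ker P)
    -- P and Id − P are independent locality maps
    (hPP : ∀ a b : A, r a b → r (P a) (P b))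
    (hPQ : ∀ a b : A, r a b → r (P a) (b - P b))
    (hQP : ∀ a b : A, r a b → r (a - P a) (P b))
    (hQQ : ∀ a b : A, r a b → r (a - P a) (b - P b)) :
    (∀ a b : A, r a b → P (a * b) = P a * P b) ↔
    (∀ a b : A, r a b → b ∈ LinearMap.ker P → a * b ∈ LinearMap.ker P) := by
  have hPid : ∀ x : A, P (P x) = P x := fun x => congrFun (congrArg DFunLike.coe hidem) x
  constructor
  · intro hmul a b hr hb
    rw [LinearMap.mem_ker] at hb ⊢
    rw [hmul a b hr, hb, mul_zero]
  · intro hideal a b hr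
    have h1 : P (P a * (b - P b)) = 0 := by
      have := hideal (P a) (b - P b) (hPQ a b hr) (by simp [LinearMap.mem_ker, map_sub, hPid])
      simpa [LinearMap.mem_ker] using this
    have h2 : P (P b * (a - P a)) = 0 := by
      have := hideal (P b) (a - P a) (hPQ b a (hsym a b hr)) (by simp [LinearMap.mem_ker, map_sub, hPid])
      simpa [LinearMap.mem_ker] using this
    have h3 : P ((a - P a) * (b - P b)) = 0 := by
      have := hA2 (a - P a) (b - P b) (by simp [LinearMap.mem_ker, map_sub, hPid])
        (by simp [LinearMap.mem_ker, map_sub, hPid]) (hQQ a b hr)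
      simpa [LinearMap.mem_ker] using this
    have h4 : P (P a * P b) = P a * P b := by
      obtain ⟨c, hc⟩ := hA1 (P a) (P b) ⟨a, rfl⟩ ⟨b, rfl⟩ (hPP a b hr)
      rw [← hc, hPid]
    have key : a * b = P a * P b + (P a * (b - P b) + (P b * (a - P a) + (a - P a) * (b - P b))) := by
      ring
    rw [key, map_add, map_add, map_add, h1, h2, h3, h4]
    ring
end

section
/- Let (C, ⊤, Δ, ε) be a locality coalgebra. Then for any (c₁, c₂) ∈ C ×_⊤ C, one can write Δ(c₁) = Σ c₁⁽¹⁾ ⊗ c₁⁽²⁾ and Δ(c₂) = Σ c₂⁽¹⁾ ⊗ c₂⁽²⁾ such that all four components (c₁⁽¹⁾, c₁⁽²⁾, c₂⁽¹⁾, c₂⁽²⁾) are pairwise ⊤-related, i.e., (Δ × Δ)(C ×_⊤ C) ⊆ (C ⊗_⊤ C) ×_⊤ (C ⊗_⊤ C). -/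
open TensorProduct

/-- Let `(C, r, Δ, ε)` be a locality coalgebra (locality vector space
with coproduct satisfying `Δ(U^⊤) ⊆ U^⊤ ⊗_⊤ U^⊤` for every `U ⊆ C`). Then for any
`(c₁, c₂) ∈ C ×_⊤ C` one can write `Δ c₁` and `Δ c₂` as sums of pure tensors such
that all four families of components are pairwise `⊤`-related, i.e.
`(Δ × Δ)(C ×_⊤ C) ⊆ (C ⊗_⊤ C) ×_⊤ (C ⊗_⊤ C)`. -/
theorem locality_coalgebra_comul_related
    {K C : Type*} [Field K] [AddCommGroup C] [Module K C] [Coalgebra K C]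
    (r : C → C → Prop)
    (hsym : ∀ a b, r a b → r b a)
    (hzero : ∀ x : C, r x 0)
    (hadd : ∀ x a b : C, r x a → r x b → r x (a + b))
    (hsmul : ∀ (x : C) (k : K) (a : C), r x a → r x (k • a))
    -- locality compatibility of the coproduct: Δ(U^⊤) ⊆ U^⊤ ⊗_⊤ U^⊤
    (hΔ : ∀ (U : Set C) (c : C), (∀ u ∈ U, r u c) →
      Coalgebra.comul (R := K) c ∈ Submodule.span K
        {t : C ⊗[K] C | ∃ a b : C, (∀ u ∈ U, r u a) ∧ (∀ u ∈ U, r u b) ∧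
          r a b ∧ t = a ⊗ₜ[K] b}) :
    ∀ c₁ c₂ : C, r c₁ c₂ →
      ∃ (n m : ℕ) (a b : Fin n → C) (d e : Fin m → C),
        Coalgebra.comul (R := K) c₁ = ∑ i, a i ⊗ₜ[K] b i ∧
        Coalgebra.comul (R := K) c₂ = ∑ j, d j ⊗ₜ[K] e j ∧
        (∀ i, r (a i) (b i)) ∧ (∀ j, r (d j) (e j)) ∧
        (∀ i j, r (a i) (d j) ∧ r (a i) (e j) ∧ r (b i) (d j) ∧ r (b i) (e j)) := by
  intro c₁ c₂ h12
  -- Step 1: expand Δ c₂ relative to U = {c₁}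
  have h2 := hΔ {c₁} c₂ (by rintro u rfl; exact h12)
  rw [Submodule.mem_span_set'] at h2
  obtain ⟨m, k, g, hg⟩ := h2
  choose d e hd he hde ht using fun j => (g j).2
  set d' : Fin m → C := fun j => k j • d j with hd'def
  have hΔ2 : Coalgebra.comul (R := K) c₂ = ∑ j, d' j ⊗ₜ[K] e j := by
    rw [← hg]
    refine Finset.sum_congr rfl fun j _ => ?_
    rw [ht j, TensorProduct.smul_tmul']
  have hrc₁d' : ∀ j, r c₁ (d' j) := fun j =>
    hsmul c₁ (k j) (d j) (hd j c₁ (Set.mem_singleton _))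
  have hrc₁e : ∀ j, r c₁ (e j) := fun j => he j c₁ (Set.mem_singleton _)
  have hd'e : ∀ j, r (d' j) (e j) := fun j =>
    hsym _ _ (hsmul (e j) (k j) (d j) (hsym _ _ (hde j)))
  -- Step 2: expand Δ c₁ relative to U = range d' ∪ range e
  set U : Set C := Set.range d' ∪ Set.range e with hUdef
  have h1 := hΔ U c₁ (by
    rintro u (⟨j, rfl⟩ | ⟨j, rfl⟩)
    · exact hsym _ _ (hrc₁d' j)
    · exact hsym _ _ (hrc₁e j))
  rw [Submodule.mem_span_set'] at h1
  obtain ⟨n, l, f, hf⟩ := h1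
  choose a b ha hb hab ht' using fun i => (f i).2
  set a' : Fin n → C := fun i => l i • a i with ha'def
  have hΔ1 : Coalgebra.comul (R := K) c₁ = ∑ i, a' i ⊗ₜ[K] b i := by
    rw [← hf]
    refine Finset.sum_congr rfl fun i _ => ?_
    rw [ht' i, TensorProduct.smul_tmul']
  have ha' : ∀ i, ∀ u ∈ U, r u (a' i) := fun i u hu => hsmul u (l i) (a i) (ha i u hu)
  refine ⟨n, m, a', b, d', e, hΔ1, hΔ2, ?_, hd'e, ?_⟩
  · intro i
    exact hsym _ _ (hsmul (b i) (l i) (a i) (hsym _ _ (hab i)))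
  · intro i j
    have hdU : d' j ∈ U := Or.inl ⟨j, rfl⟩
    have heU : e j ∈ U := Or.inr ⟨j, rfl⟩
    exact ⟨hsym _ _ (ha' i _ hdU), hsym _ _ (ha' i _ heU),
      hsym _ _ (hb i _ hdU), hsym _ _ (hb i _ heU)⟩
end

section
/- Let (C, ⊤, Δ, ε) be a connected graded locality coalgebra with C₀ = K·J, and let c ∈ C_n with n ≥ 1 be such that c ∈ U^⊤ for a subset U ⊆ C. Then the reduced coproduct satisfies Δ̃(c) := Δ(c) − J ⊗ c − c ⊗ J = Σ c′ ⊗ c″ where each c′, c″ has positive degree, each pair (c′, c″) lies in ⊤, and all c′, c″ belong to U^⊤. -/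
open TensorProduct

/-- Let `(C, r, Δ, ε)` be a connected graded locality coalgebra with
`C₀ = K·J`, and let `c ∈ C_n`, `n ≥ 1`, with `c ∈ U^⊤` for a subset `U ⊆ C`. Then
the reduced coproduct `Δ̃ c = Δ c − J ⊗ c − c ⊗ J` can be written as a finite sum
`Σ c′ ⊗ c″` where each `c′, c″` has positive degree (in `C_p`, `C_q` with
`p + q = n`, `p, q ≥ 1`), each pair `(c′, c″)` lies in `⊤`, and all `c′, c″`
belong to `U^⊤`. -/
theorem reduced_coproduct_of_connected_locality_coalgebra
    {K C : Type*} [Field K] [AddCommGroup C] [Module K C] [Coalgebra K C]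
    (r : C → C → Prop)
    (hsym : ∀ a b, r a b → r b a)
    (hzero : ∀ x : C, r x 0)
    (hadd : ∀ x a b : C, r x a → r x b → r x (a + b))
    (hsmul : ∀ (x : C) (k : K) (a : C), r x a → r x (k • a))
    -- the grading
    (Cgr : ℕ → Submodule K C)
    (hinternal : DirectSum.IsInternal Cgr)
    (J : C) (hC0 : Cgr 0 = Submodule.span K {J})
    (hεJ : Coalgebra.counit (R := K) J = 1)
    (hker : LinearMap.ker (Coalgebra.counit (R := K) (A := C)) =
      ⨆ (n : ℕ) (_ : 1 ≤ n), Cgr n)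
    -- locality connectedness of the coproduct
    (hconn : ∀ (U : Set C) (n : ℕ) (c : C), c ∈ Cgr n → (∀ u ∈ U, r u c) →
      Coalgebra.comul (R := K) c ∈ Submodule.span K
        {t : C ⊗[K] C | ∃ (p q : ℕ) (a b : C), p + q = n ∧ a ∈ Cgr p ∧ b ∈ Cgr q ∧
          (∀ u ∈ U, r u a) ∧ (∀ u ∈ U, r u b) ∧ r a b ∧ t = a ⊗ₜ[K] b}) :
    ∀ (U : Set C) (n : ℕ) (c : C), 1 ≤ n → c ∈ Cgr n → (∀ u ∈ U, r u c) →
      ∃ (k : ℕ) (a b : Fin k → C),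
        Coalgebra.comul (R := K) c - J ⊗ₜ[K] c - c ⊗ₜ[K] J = ∑ i, a i ⊗ₜ[K] b i ∧
        ∀ i, ∃ p q : ℕ, 1 ≤ p ∧ 1 ≤ q ∧ p + q = n ∧
          a i ∈ Cgr p ∧ b i ∈ Cgr q ∧ r (a i) (b i) ∧
          (∀ u ∈ U, r u (a i)) ∧ (∀ u ∈ U, r u (b i)) := by
  intro U n c hn hc hcU
  -- Step 1: write comul c as a finite sum of structured pure tensors
  have key : ∃ (k : ℕ) (a b : Fin k → C) (p q : Fin k → ℕ),
      Coalgebra.comul (R := K) c = ∑ i, a i ⊗ₜ[K] b i ∧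
      ∀ i, p i + q i = n ∧ a i ∈ Cgr (p i) ∧ b i ∈ Cgr (q i) ∧ r (a i) (b i) ∧
        (∀ u ∈ U, r u (a i)) ∧ (∀ u ∈ U, r u (b i)) := by
    have hΔ := hconn U n c hc hcU
    refine Submodule.span_induction (p := fun t _ => ∃ (k : ℕ) (a b : Fin k → C)
        (p q : Fin k → ℕ), t = ∑ i, a i ⊗ₜ[K] b i ∧
        ∀ i, p i + q i = n ∧ a i ∈ Cgr (p i) ∧ b i ∈ Cgr (q i) ∧ r (a i) (b i) ∧
          (∀ u ∈ U, r u (a i)) ∧ (∀ u ∈ U, r u (b i)))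
      ?_ ?_ ?_ ?_ hΔ
    · rintro t ⟨p, q, a, b, hpq, ha, hb, hUa, hUb, hab, rfl⟩
      exact ⟨1, fun _ => a, fun _ => b, fun _ => p, fun _ => q, by simp,
        fun _ => ⟨hpq, ha, hb, hab, hUa, hUb⟩⟩
    · exact ⟨0, ![], ![], ![], ![], by simp, fun i => i.elim0⟩
    · rintro x y _ _ ⟨k₁, a₁, b₁, p₁, q₁, rfl, h₁⟩ ⟨k₂, a₂, b₂, p₂, q₂, rfl, h₂⟩
      refine ⟨k₁ + k₂, Fin.append a₁ a₂, Fin.append b₁ b₂, Fin.append p₁ p₂,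
        Fin.append q₁ q₂, ?_, ?_⟩
      · rw [Fin.sum_univ_add]
        simp [Fin.append_left, Fin.append_right]
      · intro i
        cases i using Fin.addCases with
        | left j => simpa [Fin.append_left] using h₁ j
        | right j => simpa [Fin.append_right] using h₂ j
    · rintro l x _ ⟨k, a, b, p, q, rfl, h⟩
      refine ⟨k, fun i => l • a i, b, p, q, ?_, fun i => ?_⟩
      · rw [Finset.smul_sum]
        simp [TensorProduct.smul_tmul']
      · obtain ⟨h1, h2, h3, h4, h5, h6⟩ := h i
        exact ⟨h1, Submodule.smul_mem _ _ h2, h3,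
          hsym _ _ (hsmul _ _ _ (hsym _ _ h4)), fun u hu => hsmul _ _ _ (h5 u hu), h6⟩
  obtain ⟨k, a, b, p, q, hsum, hprop⟩ := key
  -- graded pieces of positive degree are in ker ε
  have hkerp : ∀ (m : ℕ), 1 ≤ m → ∀ x ∈ Cgr m, Coalgebra.counit (R := K) x = 0 := by
    intro m hm x hx
    have : x ∈ LinearMap.ker (Coalgebra.counit (R := K) (A := C)) := by
      rw [hker]
      exact Submodule.mem_iSup_of_mem m (Submodule.mem_iSup_of_mem hm hx)
    exact this
  -- choose coefficients for degree-0 left factors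
  have hA : ∀ i, ∃ l : K, p i = 0 → a i = l • J := by
    intro i
    by_cases hpi : p i = 0
    · have := (hprop i).2.1
      rw [hpi, hC0, Submodule.mem_span_singleton] at this
      obtain ⟨l, hl⟩ := this
      exact ⟨l, fun _ => hl.symm⟩
    · exact ⟨0, fun h => absurd h hpi⟩
  have hB : ∀ i, ∃ l : K, q i = 0 → b i = l • J := by
    intro i
    by_cases hqi : q i = 0
    · have := (hprop i).2.2.1
      rw [hqi, hC0, Submodule.mem_span_singleton] at this
      obtain ⟨l, hl⟩ := this
      exact ⟨l, fun _ => hl.symm⟩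
    · exact ⟨0, fun h => absurd h hqi⟩
  choose κ hκ using hA
  choose μ hμ using hB
  -- counit identities
  have hL : ∑ i, Coalgebra.counit (R := K) (a i) • b i = c := by
    have h1 := Coalgebra.rTensor_counit_comul (R := K) c
    rw [hsum, map_sum] at h1
    have h2 := congrArg (TensorProduct.lid K C) h1
    simpa [map_sum] using h2
  have hR : ∑ i, Coalgebra.counit (R := K) (b i) • a i = c := by
    have h1 := Coalgebra.lTensor_counit_comul (R := K) c
    rw [hsum, map_sum] at h1
    have h2 := congrArg (TensorProduct.rid K C) h1
    simpa [map_sum] using h2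
  have hcL : ∑ i ∈ Finset.univ.filter (fun i => p i = 0), κ i • b i = c := by
    rw [← hL, Finset.sum_filter]
    congr 1; ext i
    by_cases hpi : p i = 0
    · rw [if_pos hpi, hκ i hpi, map_smul, hεJ, smul_eq_mul, mul_one]
    · rw [if_neg hpi, hkerp (p i) (Nat.one_le_iff_ne_zero.mpr hpi) _ (hprop i).2.1,
        zero_smul]
  have hcR : ∑ i ∈ Finset.univ.filter (fun i => q i = 0), μ i • a i = c := by
    rw [← hR, Finset.sum_filter]
    congr 1; ext i
    by_cases hqi : q i = 0
    · rw [if_pos hqi, hμ i hqi, map_smul, hεJ, smul_eq_mul, mul_one]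
    · rw [if_neg hqi, hkerp (q i) (Nat.one_le_iff_ne_zero.mpr hqi) _ (hprop i).2.2.1,
        zero_smul]
  -- the two degenerate partial sums
  have hJc : ∑ i ∈ Finset.univ.filter (fun i => p i = 0), a i ⊗ₜ[K] b i = J ⊗ₜ[K] c := by
    rw [← hcL, TensorProduct.tmul_sum]
    refine Finset.sum_congr rfl fun i hi => ?_
    rw [Finset.mem_filter] at hi
    rw [hκ i hi.2, TensorProduct.smul_tmul]
  have hcJ : ∑ i ∈ Finset.univ.filter (fun i => q i = 0), a i ⊗ₜ[K] b i = c ⊗ₜ[K] J := by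
    rw [← hcR, TensorProduct.sum_tmul]
    refine Finset.sum_congr rfl fun i hi => ?_
    rw [Finset.mem_filter] at hi
    rw [hμ i hi.2]
    exact (TensorProduct.smul_tmul _ _ _).symm
  -- a filter identity: among i with p i ≠ 0, q i = 0 iff q i = 0 globally minus nothing
  have hq0p : ∀ i, q i = 0 → ¬ p i = 0 := by
    intro i hqi hpi
    have := (hprop i).1
    omega
  -- split the full sum
  set S₁ := Finset.univ.filter (fun i => ¬ p i = 0 ∧ ¬ q i = 0) with hS₁
  have hsplit : Coalgebra.comul (R := K) c
      = J ⊗ₜ[K] c + c ⊗ₜ[K] J + ∑ i ∈ S₁, a i ⊗ₜ[K] b i := by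
    rw [hsum, ← Finset.sum_filter_add_sum_filter_not Finset.univ (fun i => p i = 0)
      (fun i => a i ⊗ₜ[K] b i), hJc]
    rw [← Finset.sum_filter_add_sum_filter_not (Finset.univ.filter (fun i => ¬ p i = 0))
      (fun i => q i = 0) (fun i => a i ⊗ₜ[K] b i)]
    rw [Finset.filter_filter, Finset.filter_filter]
    have e1 : Finset.univ.filter (fun i => ¬ p i = 0 ∧ q i = 0)
        = Finset.univ.filter (fun i => q i = 0) := by
      apply Finset.filter_congr
      intro i _
      exact ⟨fun h => h.2, fun h => ⟨hq0p i h, h⟩⟩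
    rw [e1, hcJ]
    abel
  rw [hsplit]
  -- enumerate S₁
  refine ⟨S₁.card, fun j => a (S₁.equivFin.symm j), fun j => b (S₁.equivFin.symm j),
    ?_, ?_⟩
  · have : ∑ i ∈ S₁, a i ⊗ₜ[K] b i
        = ∑ j : Fin S₁.card, a (S₁.equivFin.symm j) ⊗ₜ[K] b (S₁.equivFin.symm j) := by
      rw [← Finset.sum_coe_sort S₁ (fun i => a i ⊗ₜ[K] b i)]
      exact (Equiv.sum_comp S₁.equivFin.symm _).symm
    rw [this]; abel
  · intro j
    have hiS := Finset.mem_filter.mp (S₁.equivFin.symm j).2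
    obtain ⟨h1, h2, h3, h4, h5, h6⟩ := hprop (S₁.equivFin.symm j)
    exact ⟨_, _, Nat.one_le_iff_ne_zero.mpr hiS.2.1,
      Nat.one_le_iff_ne_zero.mpr hiS.2.2, h1, h2, h3, h4, h5, h6⟩
end

section
/- Let (C, ⊤_C, Δ, ε) be a locality coalgebra and (A, ⊤_A, m) a locality algebra. Let L be the space of locality linear maps C → A with the relation φ ⊤_L ψ iff (φ × ψ)(⊤_C) ⊆ ⊤_A. If (φ, ψ) ∈ ⊤_L, then the convolution product φ ⋆ ψ := m ∘ (φ ⊗ ψ) ∘ Δ is a well-defined locality linear map; moreover, if ψ and χ are in U^{⊤_L} for some U ⊆ L and ψ ⊤_L χ, then ψ ⋆ χ ∈ U^{⊤_L}, and ⋆ is associative on pairwise ⊤_L-related triples, so (L, ⊤_L, ⋆) is a locality algebra. -/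
open TensorProduct

/-- Two linear maps `φ, ψ : C → A` are independent with respect to locality
relations `rC`, `rA` if `(φ × ψ)(⊤_C) ⊆ ⊤_A`. -/
def LocIndep {K C A : Type*} [Field K] [AddCommGroup C] [Module K C]
    [CommRing A] [Algebra K A] (rC : C → C → Prop) (rA : A → A → Prop)
    (φ ψ : C →ₗ[K] A) : Prop :=
  ∀ c d : C, rC c d → rA (φ c) (ψ d)

/-- The convolution product `φ ⋆ ψ = m ∘ (φ ⊗ ψ) ∘ Δ`. -/
noncomputable def locConv {K C A : Type*} [Field K] [AddCommGroup C] [Module K C]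
    [Coalgebra K C] [CommRing A] [Algebra K A] (φ ψ : C →ₗ[K] A) : C →ₗ[K] A :=
  (LinearMap.mul' K A) ∘ₗ (TensorProduct.map φ ψ) ∘ₗ Coalgebra.comul

/-- Let `(C, rC, Δ, ε)` be a locality coalgebra and `(A, rA, m)` a
locality algebra, `L` the space of locality linear maps `C → A` with
`φ ⊤_L ψ ↔ (φ × ψ)(⊤_C) ⊆ ⊤_A`. If `(φ, ψ) ∈ ⊤_L` then `φ ⋆ ψ` is a locality
linear map; if `ψ, χ ∈ U^{⊤_L}` for some `U ⊆ L` and `ψ ⊤_L χ` then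
`ψ ⋆ χ ∈ U^{⊤_L}`; and `⋆` is associative on pairwise `⊤_L`-related triples, so
`(L, ⊤_L, ⋆)` is a locality algebra. -/
theorem locality_convolution_algebra
    {K C A : Type*} [Field K] [AddCommGroup C] [Module K C] [Coalgebra K C]
    [CommRing A] [Algebra K A]
    (rC : C → C → Prop) (rA : A → A → Prop)
    (hsymC : ∀ a b, rC a b → rC b a) (hsymA : ∀ a b, rA a b → rA b a)
    (hzeroC : ∀ x : C, rC x 0) (hzeroA : ∀ x : A, rA x 0)
    (haddC : ∀ x a b : C, rC x a → rC x b → rC x (a + b))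
    (haddA : ∀ x a b : A, rA x a → rA x b → rA x (a + b))
    (hsmulC : ∀ (x : C) (k : K) (a : C), rC x a → rC x (k • a))
    (hsmulA : ∀ (x : A) (k : K) (a : A), rA x a → rA x (k • a))
    (hcompatA : ∀ x a b : A, rA x a → rA x b → rA a b → rA x (a * b))
    (hΔ : ∀ (U : Set C) (c : C), (∀ u ∈ U, rC u c) →
      Coalgebra.comul (R := K) c ∈ Submodule.span K
        {t : C ⊗[K] C | ∃ a b : C, (∀ u ∈ U, rC u a) ∧ (∀ u ∈ U, rC u b) ∧
          rC a b ∧ t = a ⊗ₜ[K] b}) :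
    -- (1) the convolution of independent locality linear maps is a locality map
    (∀ φ ψ : C →ₗ[K] A, LocIndep rC rA φ φ → LocIndep rC rA ψ ψ →
      LocIndep rC rA φ ψ → LocIndep rC rA (locConv φ ψ) (locConv φ ψ)) ∧
    -- (2) polar subsets of L are closed under convolution
    (∀ (U : Set (C →ₗ[K] A)) (ψ χ : C →ₗ[K] A),
      LocIndep rC rA ψ ψ → LocIndep rC rA χ χ → LocIndep rC rA ψ χ →
      (∀ u ∈ U, LocIndep rC rA u ψ) → (∀ u ∈ U, LocIndep rC rA u χ) →
      ∀ u ∈ U, LocIndep rC rA u (locConv ψ χ)) ∧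
    -- (3) associativity on pairwise related triples
    (∀ φ ψ χ : C →ₗ[K] A,
      LocIndep rC rA φ ψ → LocIndep rC rA ψ χ → LocIndep rC rA φ χ →
      locConv (locConv φ ψ) χ = locConv φ (locConv ψ χ)) := by
  have key : ∀ (x : A) (ψ χ : C →ₗ[K] A) (U : Set C) (c : C),
      (∀ u ∈ U, rC u c) →
      (∀ a : C, (∀ u ∈ U, rC u a) → rA x (ψ a)) →
      (∀ b : C, (∀ u ∈ U, rC u b) → rA x (χ b)) →
      LocIndep rC rA ψ χ → rA x (locConv ψ χ c) := by
    intro x ψ χ U c hUc Hψ Hχ hψχ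
    let M : Submodule K A :=
      { carrier := {y | rA x y}
        add_mem' := fun ha hb => haddA _ _ _ ha hb
        zero_mem' := hzeroA x
        smul_mem' := fun k a ha => hsmulA x k a ha }
    have hc := hΔ U c hUc
    have hsub : {t : C ⊗[K] C | ∃ a b : C, (∀ u ∈ U, rC u a) ∧ (∀ u ∈ U, rC u b) ∧
          rC a b ∧ t = a ⊗ₜ[K] b} ⊆
        (Submodule.comap ((LinearMap.mul' K A) ∘ₗ TensorProduct.map ψ χ) M : Set _) := by
      rintro t ⟨a, b, ha, hb, hab, rfl⟩
      simp only [SetLike.mem_coe, Submodule.mem_comap, LinearMap.comp_apply,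
        TensorProduct.map_tmul, LinearMap.mul'_apply]
      exact hcompatA x (ψ a) (χ b) (Hψ a ha) (Hχ b hb) (hψχ a b hab)
    have hmem := Submodule.span_le.mpr hsub hc
    rw [Submodule.mem_comap] at hmem
    simpa [locConv, M] using hmem
  have part2 : ∀ (U : Set (C →ₗ[K] A)) (ψ χ : C →ₗ[K] A),
      LocIndep rC rA ψ ψ → LocIndep rC rA χ χ → LocIndep rC rA ψ χ →
      (∀ u ∈ U, LocIndep rC rA u ψ) → (∀ u ∈ U, LocIndep rC rA u χ) →
      ∀ u ∈ U, LocIndep rC rA u (locConv ψ χ) := by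
    intro U ψ χ _ _ hψχ huψ huχ u hu c d hcd
    refine key (u c) ψ χ {c} d (by simpa using hcd) ?_ ?_ hψχ
    · intro a ha; exact huψ u hu c a (by simpa using ha)
    · intro b hb; exact huχ u hu c b (by simpa using hb)
  refine ⟨?_, part2, ?_⟩
  · intro φ ψ hφφ hψψ hφψ
    have p1φ : LocIndep rC rA (locConv φ ψ) φ := by
      intro c d hcd
      refine hsymA _ _ (key (φ d) φ ψ {d} c (by simpa using hsymC c d hcd) ?_ ?_ hφψ)
      · intro a ha; exact hφφ d a (by simpa using ha)
      · intro b hb; exact hφψ d b (by simpa using hb)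
    have p1ψ : LocIndep rC rA (locConv φ ψ) ψ := by
      intro c d hcd
      refine hsymA _ _ (key (ψ d) φ ψ {d} c (by simpa using hsymC c d hcd) ?_ ?_ hφψ)
      · intro a ha; exact hsymA _ _ (hφψ a d (hsymC d a (by simpa using ha)))
      · intro b hb; exact hψψ d b (by simpa using hb)
    intro c d hcd
    refine key (locConv φ ψ c) φ ψ {c} d (by simpa using hcd) ?_ ?_ hφψ
    · intro a ha; exact p1φ c a (by simpa using ha)
    · intro b hb; exact p1ψ c b (by simpa using hb)
  · intro φ ψ χ _ _ _
    have step : ∀ t : C ⊗[K] (C ⊗[K] C),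
        (LinearMap.mul' K A) (TensorProduct.map
            ((LinearMap.mul' K A) ∘ₗ TensorProduct.map φ ψ) χ
          ((TensorProduct.assoc K C C C).symm t)) =
        (LinearMap.mul' K A) (TensorProduct.map φ
            ((LinearMap.mul' K A) ∘ₗ TensorProduct.map ψ χ) t) := by
      intro t
      induction t using TensorProduct.induction_on with
      | zero => simp
      | tmul x yz =>
        induction yz using TensorProduct.induction_on with
        | zero => simp
        | tmul y z =>
          simp [TensorProduct.assoc_symm_tmul, LinearMap.mul'_apply, mul_assoc]
        | add u v hu hv => simp only [TensorProduct.tmul_add, map_add, hu, hv]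
      | add u v hu hv => simp only [map_add, hu, hv]
    apply LinearMap.ext
    intro c
    have e1 : TensorProduct.map (locConv φ ψ) χ =
        (TensorProduct.map ((LinearMap.mul' K A) ∘ₗ TensorProduct.map φ ψ) χ) ∘ₗ
          (LinearMap.rTensor C (Coalgebra.comul (R := K))) := by
      rw [locConv, LinearMap.rTensor, ← TensorProduct.map_comp, LinearMap.comp_id,
        LinearMap.comp_assoc]
    have e2 : TensorProduct.map φ (locConv ψ χ) =
        (TensorProduct.map φ ((LinearMap.mul' K A) ∘ₗ TensorProduct.map ψ χ)) ∘ₗ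
          (LinearMap.lTensor C (Coalgebra.comul (R := K))) := by
      rw [locConv, LinearMap.lTensor, ← TensorProduct.map_comp, LinearMap.comp_id,
        LinearMap.comp_assoc]
    show (LinearMap.mul' K A) (TensorProduct.map (locConv φ ψ) χ (Coalgebra.comul c)) =
      (LinearMap.mul' K A) (TensorProduct.map φ (locConv ψ χ) (Coalgebra.comul c))
    rw [e1, e2, LinearMap.comp_apply, LinearMap.comp_apply,
      ← Coalgebra.coassoc_symm_apply (R := K) c, step]
end
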